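/- Let Γ be a finite tree and A a coefficient system on Γ. Suppose there is a root vertex v₀ such that whenever v is the parent of a vertex w via an edge e, the half-edge map A_w → A_e attached to w is an isomorphism. Then H¹(Γ, A) = 0, and H⁰(Γ, A) is isomorphic to A_{v₀}. -/

import Mathlib

/-- A coefficient system on a finite directed multigraph with vertex type `V`,
edge type `E`, tail map `tl` and head map `hd`. -/
structure CoeffSys {V E : Type} (tl hd : E → V) where
  vert : V → Type
  edge : E → Type
  [vertGrp : ∀ v, AddCommGroup (vert v)]
  [edgeGrp : ∀ e, AddCommGroup (edge e)]
  mapT : ∀ e, vert (tl e) →+ edge e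
  mapH : ∀ e, vert (hd e) →+ edge e

attribute [instance] CoeffSys.vertGrp CoeffSys.edgeGrp

namespace CoeffSys

variable {V E : Type} {tl hd : E → V}

/-- The differential of the two-term cochain complex associated to a coefficient system. -/
def d (A : CoeffSys tl hd) : ((v : V) → A.vert v) →+ ((e : E) → A.edge e) where
  toFun a := fun e => A.mapT e (a (tl e)) + A.mapH e (a (hd e))
  map_zero' := by funext e; simp
  map_add' x y := by funext e; simp only [Pi.add_apply, map_add]; abel

/-- `H⁰(Γ, A)` is the kernel of the differential. -/
abbrev H0 (A : CoeffSys tl hd) : AddSubgroup ((v : V) → A.vert v) := A.d.ker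

/-- `H¹(Γ, A)` is the cokernel of the differential. -/
abbrev H1 (A : CoeffSys tl hd) : Type := ((e : E) → A.edge e) ⧸ A.d.range

end CoeffSys

/-- The simple graph underlying a directed multigraph. -/
def graphOf {V E : Type} (tl hd : E → V) : SimpleGraph V where
  Adj u v := u ≠ v ∧ ∃ e, (tl e = u ∧ hd e = v) ∨ (tl e = v ∧ hd e = u)
  symm := by
    constructor
    rintro u v ⟨huv, e, he⟩
    exact ⟨huv.symm, e, he.symm⟩
  loopless := by
    constructor
    rintro v ⟨hv, -⟩
    exact hv rfl

/- ### Auxiliary material -/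

private lemma cast_id' {α : Type} (h : α = α) (a : α) : cast h a = a :=
  eq_of_heq (cast_heq h a)

private lemma castc {α : Type} {B : α → Type} {x y : α} (h : x = y) (f : ∀ z, B z) :
    cast (congrArg B h) (f x) = f y := by cases h; rfl

namespace CoeffSys

variable {V E : Type} {tl hd : E → V}

open scoped Classical in
/-- Construct a cochain on the vertices by propagating values down a rooted tree:
the value at the root is `x`, and at each non-root vertex it is chosen so that the
coboundary equation at the parent edge has value `b` there. -/
noncomputable def build (A : CoeffSys tl hd) {v₀ : V}
    (pe : ∀ v : V, v ≠ v₀ → E) (dep : V → ℕ)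
    (spec2 : ∀ v (h : v ≠ v₀),
      (hd (pe v h) = v ∧ dep (tl (pe v h)) < dep v) ∨
      (tl (pe v h) = v ∧ dep (hd (pe v h)) < dep v))
    (invT : ∀ e, A.edge e → A.vert (tl e))
    (invH : ∀ e, A.edge e → A.vert (hd e))
    (x : A.vert v₀) (b : ∀ e, A.edge e) (v : V) : A.vert v :=
  if h0 : v = v₀ then cast (congrArg A.vert h0.symm) x
  else if hc : hd (pe v h0) = v then
    cast (congrArg A.vert hc)
      (invH (pe v h0) (b (pe v h0) -
        A.mapT (pe v h0) (build A pe dep spec2 invT invH x b (tl (pe v h0)))))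
  else if hc2 : tl (pe v h0) = v then
    cast (congrArg A.vert hc2)
      (invT (pe v h0) (b (pe v h0) -
        A.mapH (pe v h0) (build A pe dep spec2 invT invH x b (hd (pe v h0)))))
  else 0
termination_by dep v
decreasing_by
  · rcases spec2 v h0 with ⟨h1, h2⟩ | ⟨h1, h2⟩
    · exact h2
    · rw [h1]; rw [hc] at h2; exact h2
  · rcases spec2 v h0 with ⟨h1, h2⟩ | ⟨h1, h2⟩
    · exact absurd h1 hc
    · exact h2

variable (A : CoeffSys tl hd) {v₀ : V}
    (pe : ∀ v : V, v ≠ v₀ → E) (dep : V → ℕ)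
    (spec2 : ∀ v (h : v ≠ v₀),
      (hd (pe v h) = v ∧ dep (tl (pe v h)) < dep v) ∨
      (tl (pe v h) = v ∧ dep (hd (pe v h)) < dep v))
    (invT : ∀ e, A.edge e → A.vert (tl e))
    (invH : ∀ e, A.edge e → A.vert (hd e))
    (x : A.vert v₀) (b : ∀ e, A.edge e)

lemma build_root : build A pe dep spec2 invT invH x b v₀ = x := by
  rw [build]
  rw [dif_pos rfl]
  exact cast_id' _ _

lemma build_eqH (v : V) (h0 : v ≠ v₀) (hc : hd (pe v h0) = v) :
    build A pe dep spec2 invT invH x b v =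
      cast (congrArg A.vert hc)
        (invH (pe v h0) (b (pe v h0) -
          A.mapT (pe v h0) (build A pe dep spec2 invT invH x b (tl (pe v h0))))) := by
  conv_lhs => rw [build]
  rw [dif_neg h0, dif_pos hc]

lemma build_eqT (v : V) (h0 : v ≠ v₀) (hcn : ¬ hd (pe v h0) = v) (hc2 : tl (pe v h0) = v) :
    build A pe dep spec2 invT invH x b v =
      cast (congrArg A.vert hc2)
        (invT (pe v h0) (b (pe v h0) -
          A.mapH (pe v h0) (build A pe dep spec2 invT invH x b (hd (pe v h0))))) := by
  conv_lhs => rw [build]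
  rw [dif_neg h0, dif_neg hcn, dif_pos hc2]

lemma build_mapH (e : E) (hne : hd e ≠ v₀) (hpe : pe (hd e) hne = e)
    (hrinv : ∀ y, A.mapH e (invH e y) = y) :
    A.mapH e (build A pe dep spec2 invT invH x b (hd e)) =
      b e - A.mapT e (build A pe dep spec2 invT invH x b (tl e)) := by
  have hc : hd (pe (hd e) hne) = hd e := by rw [hpe]
  rw [build_eqH A pe dep spec2 invT invH x b (hd e) hne hc]
  revert hc
  rw [hpe]
  intro hc
  rw [cast_id']
  exact hrinv _

lemma build_mapT (e : E) (hne : tl e ≠ v₀) (hpe : pe (tl e) hne = e)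
    (hne2 : hd e ≠ tl e)
    (hrinv : ∀ y, A.mapT e (invT e y) = y) :
    A.mapT e (build A pe dep spec2 invT invH x b (tl e)) =
      b e - A.mapH e (build A pe dep spec2 invT invH x b (hd e)) := by
  have hcn : ¬ hd (pe (tl e) hne) = tl e := by rw [hpe]; exact hne2
  have hc2 : tl (pe (tl e) hne) = tl e := by rw [hpe]
  rw [build_eqT A pe dep spec2 invT invH x b (tl e) hne hcn hc2]
  revert hcn hc2
  rw [hpe]
  intro hcn hc2
  rw [cast_id']
  exact hrinv _

lemma d_build
    (hspec1 : ∀ e : E,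
      (∃ h : hd e ≠ v₀, pe (hd e) h = e ∧ ∀ y, A.mapH e (invH e y) = y) ∨
      (∃ h : tl e ≠ v₀, pe (tl e) h = e ∧ hd e ≠ tl e ∧ ∀ y, A.mapT e (invT e y) = y)) :
    A.d (build A pe dep spec2 invT invH x b) = b := by
  funext e
  have hde : A.d (build A pe dep spec2 invT invH x b) e =
      A.mapT e (build A pe dep spec2 invT invH x b (tl e)) +
        A.mapH e (build A pe dep spec2 invT invH x b (hd e)) := rfl
  rw [hde]
  rcases hspec1 e with ⟨h, hpe, hrinv⟩ | ⟨h, hpe, hne2, hrinv⟩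
  · rw [build_mapH A pe dep spec2 invT invH x b e h hpe hrinv]
    abel
  · rw [build_mapT A pe dep spec2 invT invH x b e h hpe hne2 hrinv]
    abel

lemma build_unique
    (hspec2' : ∀ v (h0 : v ≠ v₀),
      (hd (pe v h0) = v ∧ dep (tl (pe v h0)) < dep v ∧
        Function.Injective (A.mapH (pe v h0)) ∧
        (∀ y, A.mapH (pe v h0) (invH (pe v h0) y) = y)) ∨
      (¬ hd (pe v h0) = v ∧ tl (pe v h0) = v ∧ dep (hd (pe v h0)) < dep v ∧
        Function.Injective (A.mapT (pe v h0)) ∧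
        (∀ y, A.mapT (pe v h0) (invT (pe v h0) y) = y)))
    (a : ∀ v, A.vert v) (ha : A.d a = b) (ha0 : a v₀ = x) :
    a = build A pe dep spec2 invT invH x b := by
  suffices H : ∀ n, ∀ v, dep v ≤ n → a v = build A pe dep spec2 invT invH x b v by
    funext v; exact H (dep v) v le_rfl
  intro n
  induction n using Nat.strong_induction_on with
  | _ n ih =>
    intro v hv
    by_cases h0 : v = v₀
    · subst h0
      rw [build_root, ha0]
    · have hda : ∀ e : E, A.mapT e (a (tl e)) + A.mapH e (a (hd e)) = b e :=
        fun e => congrFun ha e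
      rcases hspec2' v h0 with ⟨hc, hdep, hinj, hrinv⟩ | ⟨hcn, hc2, hdep, hinj, hrinv⟩
      · have hrec : a (tl (pe v h0)) = build A pe dep spec2 invT invH x b (tl (pe v h0)) :=
          ih _ (lt_of_lt_of_le hdep hv) _ le_rfl
        have hval : a (hd (pe v h0)) =
            invH (pe v h0) (b (pe v h0) -
              A.mapT (pe v h0) (build A pe dep spec2 invT invH x b (tl (pe v h0)))) := by
          apply hinj
          rw [hrinv, ← hrec, ← hda (pe v h0)]
          abel
        rw [build_eqH A pe dep spec2 invT invH x b v h0 hc, ← hval]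
        exact (castc hc a).symm
      · have hrec : a (hd (pe v h0)) = build A pe dep spec2 invT invH x b (hd (pe v h0)) :=
          ih _ (lt_of_lt_of_le hdep hv) _ le_rfl
        have hval : a (tl (pe v h0)) =
            invT (pe v h0) (b (pe v h0) -
              A.mapH (pe v h0) (build A pe dep spec2 invT invH x b (hd (pe v h0)))) := by
          apply hinj
          rw [hrinv, ← hrec, ← hda (pe v h0)]
          abel
        rw [build_eqT A pe dep spec2 invT invH x b v h0 hcn hc2, ← hval]
        exact (castc hc2 a).symm

end CoeffSys

open CoeffSys in
/-- If `Γ` is a finite tree with a root `v₀` such that the half-edge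
map attached to the child vertex of each edge is an isomorphism, then `H¹(Γ, A) = 0`
and `H⁰(Γ, A)` is isomorphic to the group at the root. -/
theorem tree_H1_trivial_H0_root {V E : Type} [Fintype V] [Fintype E]
    {tl hd : E → V} (A : CoeffSys tl hd)
    (hloop : ∀ e : E, tl e ≠ hd e)
    (hconn : (graphOf tl hd).Connected)
    (hcard : Fintype.card V = Fintype.card E + 1)
    (v₀ : V)
    (hrootT : ∀ e : E,
      (∀ p : (graphOf tl hd).Walk v₀ (tl e), p.IsPath → hd e ∈ p.support) →
      Function.Bijective (A.mapT e))
    (hrootH : ∀ e : E,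
      (∀ p : (graphOf tl hd).Walk v₀ (hd e), p.IsPath → tl e ∈ p.support) →
      Function.Bijective (A.mapH e)) :
    (∀ x : A.H1, x = 0) ∧ Nonempty (A.H0 ≃+ A.vert v₀) := by
  classical
  set G := graphOf tl hd with hGdef
  let dep : V → ℕ := fun v => G.dist v₀ v
  have hdep0 : dep v₀ = 0 := SimpleGraph.dist_self
  have hdeppos : ∀ v : V, v ≠ v₀ → 0 < dep v :=
    fun v h => hconn.pos_dist_of_ne (Ne.symm h)
  -- every non-root vertex has an edge leading towards the root
  have hstep : ∀ n : {v : V // v ≠ v₀}, ∃ e : E,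
      (tl e = n.1 ∧ dep (hd e) + 1 = dep n.1) ∨
      (hd e = n.1 ∧ dep (tl e) + 1 = dep n.1) := by
    rintro ⟨v, hv⟩
    obtain ⟨p, hp⟩ := hconn.exists_walk_length_eq_dist v₀ v
    have hnn : ¬ p.reverse.Nil := by
      rw [SimpleGraph.Walk.not_nil_iff_lt_length, SimpleGraph.Walk.length_reverse, hp]
      exact hdeppos v hv
    obtain ⟨y, hadj, q, hq⟩ := SimpleGraph.Walk.not_nil_iff.mp hnn
    have hqlen : q.length + 1 = dep v := by
      have h1 := congrArg SimpleGraph.Walk.length hq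
      rw [SimpleGraph.Walk.length_reverse, hp, SimpleGraph.Walk.length_cons] at h1
      exact h1.symm
    have h1 : dep y ≤ q.length := by
      have h2 : G.dist y v₀ ≤ q.length := SimpleGraph.dist_le q
      have h3 : G.dist v₀ y = G.dist y v₀ := SimpleGraph.dist_comm ..
      simpa [dep, h3] using h2
    have h2 : dep v ≤ dep y + 1 := by
      have h3 : G.dist v₀ v ≤ G.dist v₀ y + G.dist y v := hconn.dist_triangle
      have h4 : G.dist y v = 1 := SimpleGraph.dist_eq_one_iff_adj.mpr hadj.symm
      simpa [dep, h4] using h3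
    have h3 : dep y + 1 = dep v := by omega
    obtain ⟨-, e, he⟩ := hadj
    rcases he with ⟨ht, hh⟩ | ⟨ht, hh⟩
    · exact ⟨e, Or.inl ⟨ht, by rw [hh]; exact h3⟩⟩
    · exact ⟨e, Or.inr ⟨hh, by rw [ht]; exact h3⟩⟩
  choose g hg using hstep
  have ginj : Function.Injective g := by
    rintro ⟨u, hu⟩ ⟨w, hw⟩ heq
    rcases hg ⟨u, hu⟩ with ⟨h1, h2⟩ | ⟨h1, h2⟩ <;>
      rcases hg ⟨w, hw⟩ with ⟨h3, h4⟩ | ⟨h3, h4⟩ <;>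
      rw [heq] at h1 h2 <;>
      simp only at h1 h2 h3 h4
    · exact Subtype.ext (h1.symm.trans h3)
    · exfalso; rw [h3] at h2; rw [h1] at h4; omega
    · exfalso; rw [h3] at h2; rw [h1] at h4; omega
    · exact Subtype.ext (h1.symm.trans h3)
  have hcards : Fintype.card {v : V // v ≠ v₀} = Fintype.card E := by
    have h1 : Fintype.card {v : V // ¬ v = v₀} = Fintype.card V - Fintype.card {v : V // v = v₀} :=
      Fintype.card_subtype_compl _
    rw [Fintype.card_subtype_eq] at h1
    have h2 : Fintype.card {v : V // v ≠ v₀} = Fintype.card {v : V // ¬ v = v₀} :=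
      Fintype.card_congr (Equiv.subtypeEquivRight (fun _ => Iff.rfl))
    omega
  have gbij : Function.Bijective g :=
    (Fintype.bijective_iff_injective_and_card g).mpr ⟨ginj, hcards⟩
  let pe : ∀ v : V, v ≠ v₀ → E := fun v h => g ⟨v, h⟩
  let par : ∀ v : V, v ≠ v₀ → V := fun v h =>
    if tl (pe v h) = v then hd (pe v h) else tl (pe v h)
  have hparT : ∀ v (h : v ≠ v₀), tl (pe v h) = v → par v h = hd (pe v h) :=
    fun v h hh => if_pos hh
  have hparF : ∀ v (h : v ≠ v₀), ¬ tl (pe v h) = v → par v h = tl (pe v h) :=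
    fun v h hh => if_neg hh
  have spec2 : ∀ v (h : v ≠ v₀),
      (hd (pe v h) = v ∧ dep (tl (pe v h)) < dep v) ∨
      (tl (pe v h) = v ∧ dep (hd (pe v h)) < dep v) := by
    intro v h
    rcases hg ⟨v, h⟩ with ⟨h1, h2⟩ | ⟨h1, h2⟩
    · have h2' : dep (hd (pe v h)) + 1 = dep v := h2
      exact Or.inr ⟨h1, by omega⟩
    · have h2' : dep (tl (pe v h)) + 1 = dep v := h2
      exact Or.inl ⟨h1, by omega⟩
  have hdich : ∀ e : E,
      (∃ h : tl e ≠ v₀, pe (tl e) h = e ∧ dep (hd e) + 1 = dep (tl e)) ∨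
      (∃ h : hd e ≠ v₀, pe (hd e) h = e ∧ dep (tl e) + 1 = dep (hd e)) := by
    intro e
    obtain ⟨n, rfl⟩ := gbij.2 e
    rcases hg n with ⟨h1, h2⟩ | ⟨h1, h2⟩
    · refine Or.inl ⟨by rw [h1]; exact n.2, ?_, by rw [h1]; exact h2⟩
      show g _ = g n
      congr 1
      exact Subtype.ext h1
    · refine Or.inr ⟨by rw [h1]; exact n.2, ?_, by rw [h1]; exact h2⟩
      show g _ = g n
      congr 1
      exact Subtype.ext h1
  -- dichotomy for adjacent vertices, with identification of the parent
  have hAdj : ∀ w y : V, G.Adj w y →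
      (∃ h : w ≠ v₀, dep y + 1 = dep w ∧ par w h = y) ∨
      (∃ h : y ≠ v₀, dep w + 1 = dep y ∧ par y h = w) := by
    intro w y hadj
    have hne : w ≠ y := hadj.ne
    obtain ⟨-, e, he⟩ := hadj
    rcases he with ⟨ht, hh⟩ | ⟨ht, hh⟩
    · -- tl e = w, hd e = y
      rcases hdich e with ⟨h3, h4, h5⟩ | ⟨h3, h4, h5⟩
      · -- tl e is the child, i.e. w is the child
        left
        have hw : w ≠ v₀ := ht ▸ h3
        have hsub : (⟨w, hw⟩ : {v : V // v ≠ v₀}) = ⟨tl e, h3⟩ := Subtype.ext ht.symm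
        have hpe : pe w hw = e := by show g _ = e; rw [hsub]; exact h4
        refine ⟨hw, by rw [← ht, ← hh]; exact h5, ?_⟩
        rw [hparT w hw (by rw [hpe]; exact ht), hpe, hh]
      · -- hd e = y is the child
        right
        have hy : y ≠ v₀ := hh ▸ h3
        have hsub : (⟨y, hy⟩ : {v : V // v ≠ v₀}) = ⟨hd e, h3⟩ := Subtype.ext hh.symm
        have hpe : pe y hy = e := by show g _ = e; rw [hsub]; exact h4
        refine ⟨hy, by rw [← ht, ← hh]; exact h5, ?_⟩
        rw [hparF y hy (by rw [hpe, ht]; exact hne), hpe, ht]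
    · -- tl e = y, hd e = w
      rcases hdich e with ⟨h3, h4, h5⟩ | ⟨h3, h4, h5⟩
      · -- tl e = y is the child
        right
        have hy : y ≠ v₀ := ht ▸ h3
        have hsub : (⟨y, hy⟩ : {v : V // v ≠ v₀}) = ⟨tl e, h3⟩ := Subtype.ext ht.symm
        have hpe : pe y hy = e := by show g _ = e; rw [hsub]; exact h4
        refine ⟨hy, by rw [← ht, ← hh]; exact h5, ?_⟩
        rw [hparT y hy (by rw [hpe]; exact ht), hpe, hh]
      · -- hd e = w is the child
        left
        have hw : w ≠ v₀ := hh ▸ h3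
        have hsub : (⟨w, hw⟩ : {v : V // v ≠ v₀}) = ⟨hd e, h3⟩ := Subtype.ext hh.symm
        have hpe : pe w hw = e := by show g _ = e; rw [hsub]; exact h4
        refine ⟨hw, by rw [← ht, ← hh]; exact h5, ?_⟩
        rw [hparF w hw (by rw [hpe, ht]; exact hne.symm), hpe, ht]
  -- every path to the root is a geodesic and starts with the parent edge
  have Lgeo : ∀ (w w' : V) (q : G.Walk w w'), q.IsPath → w' = v₀ →
      q.length = dep w ∧ ∀ h : w ≠ v₀, par w h ∈ q.support := by
    intro w w' q
    induction q with
    | nil =>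
      rintro - rfl
      exact ⟨hdep0.symm, fun h => absurd rfl h⟩
    | @cons w y w' hadj q ih =>
      rintro hp rfl
      rw [SimpleGraph.Walk.cons_isPath_iff] at hp
      obtain ⟨hq, hws⟩ := hp
      obtain ⟨hlen, hpar⟩ := ih hq rfl
      rcases hAdj w y hadj with ⟨h, hdy, hpw⟩ | ⟨h, hdw, hpy⟩
      · constructor
        · rw [SimpleGraph.Walk.length_cons, hlen, hdy]
        · intro h'
          rw [SimpleGraph.Walk.support_cons]
          have : par w h' = y := hpw
          rw [this]
          exact List.mem_cons_of_mem _ q.start_mem_support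
      · exfalso
        exact hws (hpy ▸ hpar h)
  -- bijectivity of the child-side maps
  have hchildH : ∀ e (h : hd e ≠ v₀), pe (hd e) h = e → Function.Bijective (A.mapH e) := by
    intro e h hpe
    apply hrootH e
    intro p hp
    have h2 := (Lgeo (hd e) v₀ p.reverse hp.reverse rfl).2 h
    have hpar : par (hd e) h = tl e := by
      rw [hparF (hd e) h (by rw [hpe]; exact hloop e), hpe]
    rw [hpar, SimpleGraph.Walk.support_reverse] at h2
    exact List.mem_reverse.mp h2
  have hchildT : ∀ e (h : tl e ≠ v₀), pe (tl e) h = e → Function.Bijective (A.mapT e) := by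
    intro e h hpe
    apply hrootT e
    intro p hp
    have h2 := (Lgeo (tl e) v₀ p.reverse hp.reverse rfl).2 h
    have hpar : par (tl e) h = hd e := by
      rw [hparT (tl e) h (by rw [hpe])]
      rw [hpe]
    rw [hpar, SimpleGraph.Walk.support_reverse] at h2
    exact List.mem_reverse.mp h2
  -- the algebraic data
  let invT : ∀ e, A.edge e → A.vert (tl e) := fun e => Function.invFun (A.mapT e)
  let invH : ∀ e, A.edge e → A.vert (hd e) := fun e => Function.invFun (A.mapH e)
  have hspec1 : ∀ e : E,
      (∃ h : hd e ≠ v₀, pe (hd e) h = e ∧ ∀ y, A.mapH e (invH e y) = y) ∨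
      (∃ h : tl e ≠ v₀, pe (tl e) h = e ∧ hd e ≠ tl e ∧ ∀ y, A.mapT e (invT e y) = y) := by
    intro e
    rcases hdich e with ⟨h, hpe, -⟩ | ⟨h, hpe, -⟩
    · exact Or.inr ⟨h, hpe, (hloop e).symm,
        fun y => Function.rightInverse_invFun (hchildT e h hpe).2 y⟩
    · exact Or.inl ⟨h, hpe,
        fun y => Function.rightInverse_invFun (hchildH e h hpe).2 y⟩
  have hspec2' : ∀ v (h0 : v ≠ v₀),
      (hd (pe v h0) = v ∧ dep (tl (pe v h0)) < dep v ∧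
        Function.Injective (A.mapH (pe v h0)) ∧
        (∀ y, A.mapH (pe v h0) (invH (pe v h0) y) = y)) ∨
      (¬ hd (pe v h0) = v ∧ tl (pe v h0) = v ∧ dep (hd (pe v h0)) < dep v ∧
        Function.Injective (A.mapT (pe v h0)) ∧
        (∀ y, A.mapT (pe v h0) (invT (pe v h0) y) = y)) := by
    intro v h0
    rcases hg ⟨v, h0⟩ with ⟨h1, h2⟩ | ⟨h1, h2⟩
    · -- tl (pe v h0) = v
      have h2' : dep (hd (pe v h0)) + 1 = dep v := h2
      have hbt : Function.Bijective (A.mapT (pe v h0)) := by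
        apply hchildT (pe v h0) (by rw [h1]; exact h0)
        show g _ = g _
        congr 1
        exact Subtype.ext h1
      refine Or.inr ⟨?_, h1, by omega, hbt.1,
        fun y => Function.rightInverse_invFun hbt.2 y⟩
      intro hh
      exact hloop (pe v h0) (h1.trans hh.symm)
    · -- hd (pe v h0) = v
      have h2' : dep (tl (pe v h0)) + 1 = dep v := h2
      have hbh : Function.Bijective (A.mapH (pe v h0)) := by
        apply hchildH (pe v h0) (by rw [h1]; exact h0)
        show g _ = g _
        congr 1
        exact Subtype.ext h1
      exact Or.inl ⟨h1, by omega, hbh.1,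
        fun y => Function.rightInverse_invFun hbh.2 y⟩
  constructor
  · -- H¹ vanishes
    intro z
    refine QuotientAddGroup.induction_on z (fun b => ?_)
    refine (QuotientAddGroup.eq_zero_iff b).mpr ?_
    exact ⟨build A pe dep spec2 invT invH 0 b,
      d_build A pe dep spec2 invT invH 0 b hspec1⟩
  · -- H⁰ is the group at the root
    refine ⟨AddEquiv.ofBijective
      ((Pi.evalAddMonoidHom A.vert v₀).comp (AddSubgroup.subtype A.H0)) ⟨?_, ?_⟩⟩
    · rintro ⟨a, haa⟩ ⟨a', haa'⟩ hv
      have hv' : a v₀ = a' v₀ := hv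
      have hd1 : A.d a = 0 := AddMonoidHom.mem_ker.mp haa
      have hd2 : A.d a' = 0 := AddMonoidHom.mem_ker.mp haa'
      have e1 : a = build A pe dep spec2 invT invH (a v₀) 0 :=
        build_unique A pe dep spec2 invT invH (a v₀) 0 hspec2' a hd1 rfl
      have e2 : a' = build A pe dep spec2 invT invH (a v₀) 0 :=
        build_unique A pe dep spec2 invT invH (a v₀) 0 hspec2' a' hd2 hv'.symm
      exact Subtype.ext (e1.trans e2.symm)
    · intro y
      refine ⟨⟨build A pe dep spec2 invT invH y 0, ?_⟩, ?_⟩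
      · exact AddMonoidHom.mem_ker.mpr (d_build A pe dep spec2 invT invH y 0 hspec1)
      · exact build_root A pe dep spec2 invT invH y 0
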